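/- Let n ≥ 6 and let π be a permutation of {1,…,n} of the form π = A·n·B·(n−1)·C·(n−2)·D, where A, B, C, D are (possibly empty) words over {1,…,n−3} and the total length of B, C, D is at least 2. Then ssc(π) = n−3 if and only if the word S(A)·S(B)·S(C)·S(D) ends with the suffix (n−3),1. -/

import Mathlib

/-- The largest letter of a word (`0` for the empty word). -/
def listMax (l : List ℕ) : ℕ := l.foldr max 0

lemma listMax_mem {l : List ℕ} (h : l ≠ []) : listMax l ∈ l := by
  induction l with
  | nil => simp at h
  | cons a t ih =>
    rcases eq_or_ne t [] with rfl | ht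
    · simp [listMax]
    · have ht' := ih ht
      have hcons : listMax (a :: t) = max a (listMax t) := rfl
      rcases le_total a (listMax t) with hle | hle
      · rw [hcons, max_eq_right hle]; exact List.mem_cons_of_mem _ ht'
      · rw [hcons, max_eq_left hle]; exact List.mem_cons_self

/-- The stack-sorting operator `S`: `S` of the empty word is the empty word, and
if `π` is nonempty, writing `π = L·m·R` where `m` is the greatest letter of `π`,
then `S(π) = S(L)·S(R)·m`. -/
def stackSort : List ℕ → List ℕ
  | [] => []
  | x :: xs =>
    stackSort ((x :: xs).take ((x :: xs).idxOf (listMax (x :: xs)))) ++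
      stackSort ((x :: xs).drop ((x :: xs).idxOf (listMax (x :: xs)) + 1)) ++
      [listMax (x :: xs)]
termination_by l => l.length
decreasing_by
  · have hm : listMax (x :: xs) ∈ x :: xs := listMax_mem (by simp)
    have hi : (x :: xs).idxOf (listMax (x :: xs)) < (x :: xs).length :=
      List.idxOf_lt_length_iff.mpr hm
    simp only [List.length_take, List.length_cons] at *
    omega
  · simp only [List.length_drop, List.length_cons]
    omega

/-- `π` is a permutation of `{1, …, n}`, viewed as a word containing each of
`1, …, n` exactly once. -/
def IsPermWord (n : ℕ) (π : List ℕ) : Prop := π.Perm (List.range' 1 n)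

/-- The stack-sorting complexity of `π`: the least `k ≥ 0` such that `S^k(π)`
is the identity word `1, 2, …, n` (where `n` is the length of `π`). -/
noncomputable def ssc (π : List ℕ) : ℕ :=
  sInf {k : ℕ | stackSort^[k] π = List.range' 1 π.length}

lemma le_listMax {l : List ℕ} {x : ℕ} (h : x ∈ l) : x ≤ listMax l := by
  induction l with
  | nil => simp at h
  | cons a t ih =>
    rcases List.mem_cons.mp h with rfl | h'
    · exact le_max_left _ _
    · exact le_trans (ih h') (le_max_right _ _)

lemma listMax_le {l : List ℕ} {m : ℕ} (h : ∀ x ∈ l, x ≤ m) : listMax l ≤ m := by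
  induction l with
  | nil => exact Nat.zero_le m
  | cons a t ih =>
    exact max_le (h a (by simp)) (ih fun x hx => h x (by simp [hx]))

lemma listMax_append (X Y : List ℕ) : listMax (X ++ Y) = max (listMax X) (listMax Y) := by
  induction X with
  | nil => simp [listMax]
  | cons a t ih =>
    show max a (listMax (t ++ Y)) = max (max a (listMax t)) (listMax Y)
    rw [ih, max_assoc]

lemma stackSort_nil : stackSort [] = [] := by rw [stackSort]

lemma stackSort_ne_nil_eq {l : List ℕ} (h : l ≠ []) :
    stackSort l = stackSort (l.take (l.idxOf (listMax l))) ++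
      stackSort (l.drop (l.idxOf (listMax l) + 1)) ++ [listMax l] := by
  cases l with
  | nil => exact absurd rfl h
  | cons x xs => rw [stackSort]

lemma stackSort_split {X Y : List ℕ} {m : ℕ} (hX : ∀ x ∈ X, x < m) (hY : ∀ y ∈ Y, y ≤ m) :
    stackSort (X ++ m :: Y) = stackSort X ++ stackSort Y ++ [m] := by
  have hne : X ++ m :: Y ≠ [] := by simp
  have hmax : listMax (X ++ m :: Y) = m := by
    rw [listMax_append]
    have h1 : listMax X ≤ m := listMax_le fun x hx => le_of_lt (hX x hx)
    have h2 : listMax (m :: Y) = m := by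
      show max m (listMax Y) = m
      exact max_eq_left (listMax_le hY)
    rw [h2]; exact max_eq_right h1
  have hnm : m ∉ X := fun h => lt_irrefl m (hX m h)
  have hidx : (X ++ m :: Y).idxOf m = X.length := by
    rw [List.idxOf_append_of_notMem hnm]; simp
  rw [stackSort_ne_nil_eq hne, hmax, hidx]
  congr 1
  · congr 2
    · simp [List.take_append]
    · simp [List.drop_append]

lemma stackSort_perm (l : List ℕ) : (stackSort l).Perm l := by
  rcases eq_or_ne l [] with rfl | h
  · simp [stackSort_nil]
  · rw [stackSort_ne_nil_eq h]
    have hm : listMax l ∈ l := listMax_mem h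
    have hil : l.idxOf (listMax l) < l.length := List.idxOf_lt_length_iff.mpr hm
    set i := l.idxOf (listMax l) with hi
    have hdec : l = l.take i ++ listMax l :: l.drop (i + 1) := by
      conv_lhs => rw [← List.take_append_drop i l]
      congr 1
      rw [List.drop_eq_getElem_cons hil]
      congr 1
      exact List.getElem_idxOf hil
    have h1 := stackSort_perm (l.take i)
    have h2 := stackSort_perm (l.drop (i + 1))
    have p1 : (stackSort (l.take i) ++ stackSort (l.drop (i + 1)) ++ [listMax l]).Perm
        (l.take i ++ l.drop (i + 1) ++ [listMax l]) :=
      (h1.append h2).append (List.Perm.refl _)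
    have p2 := List.perm_append_singleton (listMax l) (l.take i ++ l.drop (i + 1))
    have p3 : (listMax l :: (l.take i ++ l.drop (i + 1))).Perm l := by
      conv_rhs => rw [hdec]
      exact List.perm_middle.symm
    exact (p1.trans p2).trans p3
termination_by l.length
decreasing_by
  · simp only [List.length_take]; omega
  · simp only [List.length_drop]; omega

lemma stackSort_singleton (a : ℕ) : stackSort [a] = [a] := by
  have := stackSort_split (X := []) (Y := []) (m := a) (by simp) (by simp)
  simpa [stackSort_nil] using this

lemma stackSort_concat_max {l : List ℕ} (h : l ≠ []) :
    ∃ l', stackSort l = l' ++ [listMax l] := ⟨_, stackSort_ne_nil_eq h⟩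

/-- appending the next fixed point commutes with stackSort -/
lemma stackSort_append_fix {U : List ℕ} {r : ℕ} (hU : ∀ x ∈ U, x ≤ r) :
    stackSort (U ++ [r + 1]) = stackSort U ++ [r + 1] := by
  have := stackSort_split (X := U) (Y := []) (m := r + 1)
    (fun x hx => Nat.lt_succ_of_le (hU x hx)) (by simp)
  simpa [stackSort_nil] using this

lemma mem_perm_range_le {U : List ℕ} {r : ℕ} (hU : U.Perm (List.range' 1 r)) :
    ∀ x ∈ U, 1 ≤ x ∧ x ≤ r := by
  intro x hx
  have := List.mem_range'_1.mp (hU.mem_iff.mp hx)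
  omega

lemma range'_concat_one (r : ℕ) :
    List.range' 1 (r + 1) = List.range' 1 r ++ [r + 1] := by
  rw [List.range'_concat]; norm_num [Nat.add_comm]

lemma iterate_perm (k : ℕ) (l : List ℕ) : (stackSort^[k] l).Perm l := by
  induction k with
  | zero => simp
  | succ k ih =>
    rw [Function.iterate_succ_apply']
    exact (stackSort_perm _).trans ih

lemma iterate_append_fix {U : List ℕ} {r : ℕ} (hU : U.Perm (List.range' 1 r)) (k : ℕ) :
    stackSort^[k] (U ++ [r + 1]) = stackSort^[k] U ++ [r + 1] := by
  induction k with
  | zero => simp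
  | succ k ih =>
    rw [Function.iterate_succ_apply', Function.iterate_succ_apply', ih]
    exact stackSort_append_fix fun x hx =>
      (mem_perm_range_le ((iterate_perm k U).trans hU) x hx).2

lemma exists_split {m : ℕ} {σ : List ℕ} (h : σ.Perm (List.range' 1 (m + 1))) :
    ∃ X Y : List ℕ, σ = X ++ (m + 1) :: Y ∧
      stackSort σ = (stackSort X ++ stackSort Y) ++ [m + 1] ∧
      (X ++ Y).Perm (List.range' 1 m) ∧
      (∀ x ∈ X, 1 ≤ x ∧ x ≤ m) ∧ (∀ y ∈ Y, 1 ≤ y ∧ y ≤ m) ∧ Y.Nodup := by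
  have hmem : (m + 1) ∈ σ := h.mem_iff.mpr (by simp [List.mem_range'_1])
  obtain ⟨X, Y, rfl⟩ := List.append_of_mem hmem
  have hnd : (X ++ (m + 1) :: Y).Nodup :=
    h.symm.nodup (List.nodup_range' (s := 1) (n := m + 1))
  have hndX : (m + 1) ∉ X := by
    rw [List.nodup_append] at hnd
    exact fun hx => hnd.2.2 _ hx _ (by simp) rfl
  have hndY : (m + 1) ∉ Y ∧ Y.Nodup := by
    rw [List.nodup_append, List.nodup_cons] at hnd
    exact ⟨hnd.2.1.1, hnd.2.1.2⟩
  have hboundsσ := mem_perm_range_le h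
  have hXb : ∀ x ∈ X, 1 ≤ x ∧ x ≤ m := by
    intro x hx
    have h1 := hboundsσ x (by simp [hx])
    have : x ≠ m + 1 := fun he => hndX (he ▸ hx)
    omega
  have hYb : ∀ y ∈ Y, 1 ≤ y ∧ y ≤ m := by
    intro y hy
    have h1 := hboundsσ y (by simp [hy])
    have : y ≠ m + 1 := fun he => hndY.1 (he ▸ hy)
    omega
  have hsplit : stackSort (X ++ (m + 1) :: Y) = (stackSort X ++ stackSort Y) ++ [m + 1] := by
    have := stackSort_split (X := X) (Y := Y) (m := m + 1)
      (fun x hx => by have := hXb x hx; omega)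
      (fun y hy => by have := hYb y hy; omega)
    simpa using this
  have hperm : (X ++ Y).Perm (List.range' 1 m) := by
    have h1 : ((m + 1) :: (X ++ Y)).Perm ((m + 1) :: List.range' 1 m) := by
      refine (List.perm_middle.symm.trans h).trans ?_
      rw [range'_concat_one]
      exact List.perm_append_singleton _ _
    exact (List.perm_cons _).mp h1
  exact ⟨X, Y, rfl, hsplit, hperm, hXb, hYb, hndY.2⟩

lemma stackSort_of_perm_range {m : ℕ} {σ : List ℕ} (h : σ.Perm (List.range' 1 (m + 1))) :
    ∃ T : List ℕ, stackSort σ = T ++ [m + 1] ∧ T.Perm (List.range' 1 m) := by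
  obtain ⟨X, Y, -, hs, hp, -, -, -⟩ := exists_split h
  exact ⟨stackSort X ++ stackSort Y, hs,
    ((stackSort_perm X).append (stackSort_perm Y)).trans hp⟩

/-- West: `m - 1` iterations sort any permutation of `{1,…,m}`. -/
lemma west : ∀ (m : ℕ) (σ : List ℕ), σ.Perm (List.range' 1 m) →
    stackSort^[m - 1] σ = List.range' 1 m := by
  intro m
  induction m with
  | zero => intro σ h; simpa using (List.perm_nil.mp (by simpa using h)) 
  | succ m ih =>
    intro σ h
    cases Nat.eq_zero_or_pos m with
    | inl hm =>
      subst hm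
      have : σ = [1] := List.perm_singleton.mp (by simpa using h)
      simp [this]
    | inr hm =>
      obtain ⟨T, hT, hTp⟩ := stackSort_of_perm_range h
      have : m + 1 - 1 = (m - 1) + 1 := by omega
      rw [this, Function.iterate_succ_apply, hT, iterate_append_fix hTp, ih T hTp,
        range'_concat_one]

lemma ssc_eq_sInf {m : ℕ} {σ : List ℕ} (h : σ.Perm (List.range' 1 m)) :
    ssc σ = sInf {k : ℕ | stackSort^[k] σ = List.range' 1 m} := by
  have : σ.length = m := by simpa using h.length_eq
  rw [ssc, this]

lemma ssc_set_nonempty {m : ℕ} {σ : List ℕ} (h : σ.Perm (List.range' 1 m)) :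
    {k : ℕ | stackSort^[k] σ = List.range' 1 m}.Nonempty :=
  ⟨m - 1, west m σ h⟩

lemma ssc_id (m : ℕ) : ssc (List.range' 1 m) = 0 := by
  rw [ssc_eq_sInf (List.Perm.refl _)]
  exact Nat.sInf_eq_zero.mpr (Or.inl (by simp))

lemma ssc_append_fix {U : List ℕ} {r : ℕ} (hU : U.Perm (List.range' 1 r)) :
    ssc (U ++ [r + 1]) = ssc U := by
  have hU' : (U ++ [r + 1]).Perm (List.range' 1 (r + 1)) := by
    rw [range'_concat_one]
    exact hU.append (List.Perm.refl _)
  rw [ssc_eq_sInf hU', ssc_eq_sInf hU]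
  congr 1
  ext k
  simp only [Set.mem_setOf_eq]
  rw [iterate_append_fix hU k, range'_concat_one]
  constructor
  · exact fun he => List.append_cancel_right he
  · exact fun he => by rw [he]

lemma ssc_step {m : ℕ} {σ T : List ℕ} (h : σ.Perm (List.range' 1 (m + 1)))
    (hne : σ ≠ List.range' 1 (m + 1))
    (hT : stackSort σ = T ++ [m + 1]) (hTp : T.Perm (List.range' 1 m)) :
    ssc σ = 1 + ssc T := by
  rw [ssc_eq_sInf h, ssc_eq_sInf hTp]
  set P := {k : ℕ | stackSort^[k] σ = List.range' 1 (m + 1)} with hP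
  set Q := {k : ℕ | stackSort^[k] T = List.range' 1 m} with hQ
  have hiff : ∀ k, (k + 1) ∈ P ↔ k ∈ Q := by
    intro k
    simp only [hP, hQ, Set.mem_setOf_eq, Function.iterate_succ_apply, hT,
      iterate_append_fix hTp k, range'_concat_one]
    constructor
    · exact fun he => List.append_cancel_right he
    · exact fun he => by rw [he]
  have hQne : Q.Nonempty := ssc_set_nonempty hTp
  have hPne : P.Nonempty := ssc_set_nonempty h
  have h0 : 0 ∉ P := by simpa [hP] using hne
  have hq := Nat.sInf_mem hQne
  have hle : sInf P ≤ 1 + sInf Q := by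
    have : sInf Q + 1 ∈ P := (hiff _).mpr hq
    have := Nat.sInf_le this
    omega
  have hge : 1 + sInf Q ≤ sInf P := by
    have hp := Nat.sInf_mem hPne
    rcases Nat.exists_eq_succ_of_ne_zero (fun he : sInf P = 0 => h0 (he ▸ hp)) with ⟨k, hk⟩
    rw [hk] at hp
    have : k ∈ Q := (hiff k).mp hp
    have := Nat.sInf_le this
    omega
  omega

lemma concat_eq_concat {u v : List ℕ} {a b : ℕ} (h : u ++ [a] = v ++ [b]) : a = b := by
  have := congrArg List.getLast? h
  rw [List.getLast?_concat, List.getLast?_concat] at this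
  exact Option.some.inj this

lemma ssc_char : ∀ m, 2 ≤ m → ∀ σ : List ℕ, σ.Perm (List.range' 1 m) →
    (ssc σ = m - 1 ↔ ∃ w, σ = w ++ [m, 1]) := by
  intro m hm
  induction m, hm using Nat.le_induction with
  | base =>
    intro σ h
    have hl : σ.length = 2 := by simpa using h.length_eq
    have hr2 : List.range' 1 2 = [1, 2] := by decide
    rw [hr2] at h
    match σ, hl with
    | [a, b], _ =>
      have hnd : ([a, b] : List ℕ).Nodup := h.symm.nodup (by decide)
      have hab : a ≠ b := by simpa using hnd
      have ha : a ∈ ([1, 2] : List ℕ) := h.mem_iff.mp (by simp)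
      have hb : b ∈ ([1, 2] : List ℕ) := h.mem_iff.mp (by simp)
      simp only [List.mem_cons, List.mem_singleton, List.not_mem_nil, or_false] at ha hb
      rcases ha with rfl | rfl <;> rcases hb with rfl | rfl
      · exact absurd rfl hab
      · -- σ = [1, 2]
        constructor
        · intro h0
          have : ssc [1, 2] = 0 := by
            have := ssc_id 2; rwa [hr2] at this
          omega
        · rintro ⟨w, hw⟩
          rcases w with _ | ⟨x, w⟩
          · simp at hw
          · have := congrArg List.length hw
            simp at this
      · -- σ = [2, 1]
        have hS : stackSort [2, 1] = [1, 2] := by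
          have := stackSort_split (X := []) (Y := [1]) (m := 2) (by simp) (by simp)
          simpa [stackSort_nil, stackSort_singleton] using this
        have hT : stackSort [2, 1] = [1] ++ [2] := by simpa using hS
        have hstep : ssc [2, 1] = 1 + ssc [1] := by
          refine ssc_step (m := 1) (by rw [hr2]; decide) (by rw [hr2]; decide) hT ?_
          decide
        have h1 : ssc [1] = 0 := by
          have := ssc_id 1
          simpa [List.range'] using this
        constructor
        · intro _; exact ⟨[], by simp⟩
        · intro _; omega
      · exact absurd rfl hab
  | succ m hm ih =>
    intro σ h
    have hidne : ssc (List.range' 1 (m + 1)) = 0 := ssc_id _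
    constructor
    · intro hs
      have hσne : σ ≠ List.range' 1 (m + 1) := by
        intro he; rw [he, hidne] at hs; omega
      obtain ⟨X, Y, hσ, hSσ, hXY, hXb, hYb, hYnd⟩ := exists_split h
      have hTp : (stackSort X ++ stackSort Y).Perm (List.range' 1 m) :=
        ((stackSort_perm X).append (stackSort_perm Y)).trans hXY
      have hstep := ssc_step h hσne hSσ hTp
      have hT : ssc (stackSort X ++ stackSort Y) = m - 1 := by omega
      obtain ⟨w', hw'⟩ := (ih _ hTp).mp hT
      have hw'' : stackSort X ++ stackSort Y = (w' ++ [m]) ++ [1] := by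
        rw [hw']; simp
      rcases Y with _ | ⟨y, Y'⟩
      · -- Y = [] : contradiction
        exfalso
        have hXp : X.Perm (List.range' 1 m) := by simpa using hXY
        have hXne : X ≠ [] := by
          intro he
          have := hXp.length_eq
          simp [he] at this
          omega
        obtain ⟨l', hl'⟩ := stackSort_concat_max hXne
        have : listMax X = 1 := by
          have hx : stackSort X ++ stackSort ([] : List ℕ) = (w' ++ [m]) ++ [1] := hw''
          rw [stackSort_nil, List.append_nil, hl'] at hx
          exact concat_eq_concat hx
        have hmX : m ∈ X := hXp.mem_iff.mpr (by simp [List.mem_range'_1]; omega)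
        have := le_listMax hmX
        omega
      · -- Y = y :: Y'
        have hYne : (y :: Y') ≠ [] := by simp
        obtain ⟨l'', hl''⟩ := stackSort_concat_max hYne
        have hmaxY : listMax (y :: Y') = 1 := by
          apply concat_eq_concat (u := stackSort X ++ l'')
          rw [List.append_assoc, ← hl'']
          exact hw''
        have hyall : ∀ z ∈ (y :: Y'), z = 1 := by
          intro z hz
          have h1 := (hYb z hz).1
          have h2 := le_listMax hz
          omega
        have hy1 : y = 1 := hyall y (by simp)
        have hY' : Y' = [] := by
          rcases Y' with _ | ⟨z, _⟩
          · rfl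
          · exfalso
            have hz1 : z = 1 := hyall z (by simp)
            rw [List.nodup_cons] at hYnd
            exact hYnd.1 (by simp [hy1, hz1])
        refine ⟨X, ?_⟩
        rw [hσ, hy1, hY']
    · rintro ⟨P, rfl⟩
      have hnd : (P ++ [m + 1, 1]).Nodup := h.symm.nodup (List.nodup_range' (s := 1) (n := m + 1))
      rw [List.nodup_append] at hnd
      have hPb : ∀ x ∈ P, 1 ≤ x ∧ x ≤ m := by
        intro x hx
        have h1 := mem_perm_range_le h x (by simp [hx])
        have : x ≠ m + 1 := fun he => hnd.2.2 _ hx (m + 1) (by simp) he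
        omega
      have hSσ : stackSort (P ++ [m + 1, 1]) = (stackSort P ++ [1]) ++ [m + 1] := by
        have : P ++ [m + 1, 1] = P ++ (m + 1) :: [1] := by simp
        rw [this, stackSort_split (fun x hx => by have := hPb x hx; omega) (by simp),
          stackSort_singleton]
      have hP1 : (P ++ [1]).Perm (List.range' 1 m) := by
        have h1 : (P ++ (m + 1) :: [1]).Perm ((m + 1) :: (P ++ [1])) := List.perm_middle
        have h2 : (P ++ [m + 1, 1]).Perm ((m + 1) :: (P ++ [1])) := by simpa using h1
        have h3 : ((m + 1) :: (P ++ [1])).Perm ((m + 1) :: List.range' 1 m) :=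
          (h2.symm.trans h).trans (by rw [range'_concat_one]; exact List.perm_append_singleton _ _)
        exact (List.perm_cons _).mp h3
      have hTp : (stackSort P ++ [1]).Perm (List.range' 1 m) :=
        ((stackSort_perm P).append (List.Perm.refl _)).trans hP1
      have hσne : P ++ [m + 1, 1] ≠ List.range' 1 (m + 1) := by
        intro he
        have h1 : P ++ [m + 1, 1] = (P ++ [m + 1]) ++ [1] := by simp
        rw [h1, range'_concat_one] at he
        have := concat_eq_concat he
        omega
      have hstep := ssc_step h hσne hSσ hTp
      have hPne : P ≠ [] := by
        intro he
        have := hP1.length_eq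
        simp [he] at this
        omega
      obtain ⟨l', hl'⟩ := stackSort_concat_max hPne
      have hmaxP : listMax P = m := by
        have h1 : listMax P ≤ m := listMax_le fun x hx => (hPb x hx).2
        have hmP : m ∈ P := by
          have : m ∈ P ++ [1] := hP1.mem_iff.mpr (by simp [List.mem_range'_1]; omega)
          rcases List.mem_append.mp this with h' | h'
          · exact h'
          · simp at h'; omega
        have := le_listMax hmP
        omega
      have hTend : stackSort P ++ [1] = (l' ++ [m]) ++ [1] := by
        rw [hl', hmaxP]
      have hTs : ssc (stackSort P ++ [1]) = m - 1 := by
        refine (ih _ hTp).mpr ⟨l', ?_⟩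
        rw [hTend]; simp
      omega


lemma perm_concat_cancel {U V : List ℕ} {x : ℕ} (h : (U ++ [x]).Perm (V ++ [x])) :
    U.Perm V :=
  (List.perm_cons x).mp
    ((List.perm_append_singleton x U).symm.trans (h.trans (List.perm_append_singleton x V)))


/-- Let `n ≥ 6` and let `π = A·n·B·(n−1)·C·(n−2)·D` be a permutation of
`{1,…,n}`, where `A, B, C, D` are words over `{1,…,n−3}` and the total length
of `B, C, D` is at least `2`. Then `ssc(π) = n−3` if and only if the word
`S(A)·S(B)·S(C)·S(D)` ends with the suffix `(n−3), 1`. -/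
theorem ssc_eq_n_sub_three_iff_split (n : ℕ) (hn : 6 ≤ n) (A B C D : List ℕ)
    (hABCD : ∀ x ∈ A ++ B ++ C ++ D, 1 ≤ x ∧ x ≤ n - 3)
    (hlen : 2 ≤ B.length + C.length + D.length)
    (hπ : IsPermWord n (A ++ [n] ++ B ++ [n - 1] ++ C ++ [n - 2] ++ D)) :
    ssc (A ++ [n] ++ B ++ [n - 1] ++ C ++ [n - 2] ++ D) = n - 3 ↔
      ∃ w : List ℕ,
        stackSort A ++ stackSort B ++ stackSort C ++ stackSort D = w ++ [n - 3, 1] := by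
  obtain ⟨a, rfl⟩ : ∃ a, n = a + 3 := ⟨n - 3, by omega⟩
  have ha : 3 ≤ a := by omega
  have e1 : a + 3 - 1 = a + 2 := by omega
  have e2 : a + 3 - 2 = a + 1 := by omega
  have e3 : a + 3 - 3 = a := by omega
  rw [e1, e2] at hπ ⊢
  rw [e3] at hABCD ⊢
  -- element bounds
  have hA : ∀ x ∈ A, 1 ≤ x ∧ x ≤ a := fun x hx => hABCD x (by simp [hx])
  have hB : ∀ x ∈ B, 1 ≤ x ∧ x ≤ a := fun x hx => hABCD x (by simp [hx])
  have hC : ∀ x ∈ C, 1 ≤ x ∧ x ≤ a := fun x hx => hABCD x (by simp [hx])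
  have hD : ∀ x ∈ D, 1 ≤ x ∧ x ≤ a := fun x hx => hABCD x (by simp [hx])
  rw [IsPermWord] at hπ
  set W := stackSort A ++ stackSort B ++ stackSort C ++ stackSort D with hW
  -- compute stackSort of π
  have hπeq : A ++ [a + 3] ++ B ++ [a + 2] ++ C ++ [a + 1] ++ D
      = A ++ (a + 3) :: (B ++ (a + 2) :: (C ++ (a + 1) :: D)) := by simp
  have hS1 : stackSort (C ++ (a + 1) :: D) = stackSort C ++ stackSort D ++ [a + 1] :=
    stackSort_split (fun x hx => by have := hC x hx; omega)
      (fun y hy => by have := hD y hy; omega)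
  have hS2 : stackSort (B ++ (a + 2) :: (C ++ (a + 1) :: D))
      = stackSort B ++ stackSort (C ++ (a + 1) :: D) ++ [a + 2] :=
    stackSort_split (fun x hx => by have := hB x hx; omega)
      (fun y hy => by
        rcases List.mem_append.mp hy with h | h
        · have := hC y h; omega
        · rcases List.mem_cons.mp h with rfl | h
          · omega
          · have := hD y h; omega)
  have hS3 : stackSort (A ++ (a + 3) :: (B ++ (a + 2) :: (C ++ (a + 1) :: D)))
      = stackSort A ++ stackSort (B ++ (a + 2) :: (C ++ (a + 1) :: D)) ++ [a + 3] :=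
    stackSort_split (fun x hx => by have := hA x hx; omega)
      (fun y hy => by
        rcases List.mem_append.mp hy with h | h
        · have := hB y h; omega
        · rcases List.mem_cons.mp h with rfl | h
          · omega
          · rcases List.mem_append.mp h with h' | h'
            · have := hC y h'; omega
            · rcases List.mem_cons.mp h' with rfl | h'
              · omega
              · have := hD y h'; omega)
  have hSπ : stackSort (A ++ [a + 3] ++ B ++ [a + 2] ++ C ++ [a + 1] ++ D)
      = ((W ++ [a + 1]) ++ [a + 2]) ++ [a + 3] := by
    rw [hπeq, hS3, hS2, hS1, hW]
    simp [List.append_assoc]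
  -- W is a permutation of 1..a
  have hWperm : W.Perm (List.range' 1 a) := by
    have h0 : (stackSort (A ++ [a + 3] ++ B ++ [a + 2] ++ C ++ [a + 1] ++ D)).Perm
        (List.range' 1 (a + 3)) := (stackSort_perm _).trans hπ
    rw [hSπ] at h0
    have er3 : List.range' 1 (a + 3) = List.range' 1 (a + 2) ++ [a + 3] := by
      rw [show a + 3 = (a + 2) + 1 by omega, range'_concat_one]
    have er2 : List.range' 1 (a + 2) = List.range' 1 (a + 1) ++ [a + 2] := by
      rw [show a + 2 = (a + 1) + 1 by omega, range'_concat_one]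
    have er1 : List.range' 1 (a + 1) = List.range' 1 a ++ [a + 1] := range'_concat_one a
    rw [er3, er2, er1] at h0
    exact perm_concat_cancel (perm_concat_cancel (perm_concat_cancel h0))
  -- π is not the identity
  have hπne : A ++ [a + 3] ++ B ++ [a + 2] ++ C ++ [a + 1] ++ D
      ≠ List.range' 1 (a + 3) := by
    intro he
    have er3 : List.range' 1 (a + 3) = List.range' 1 (a + 2) ++ [a + 3] := by
      rw [show a + 3 = (a + 2) + 1 by omega, range'_concat_one]
    rcases List.eq_nil_or_concat D with rfl | ⟨L, b, rfl⟩
    · have h1 : A ++ [a + 3] ++ B ++ [a + 2] ++ C ++ [a + 1] ++ ([] : List ℕ)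
          = (A ++ [a + 3] ++ B ++ [a + 2] ++ C) ++ [a + 1] := by simp
      rw [h1, er3] at he
      have := concat_eq_concat he; omega
    · simp only [List.concat_eq_append] at he hD
      have hb : b ≤ a := (hD b (by simp)).2
      rw [← List.append_assoc, er3] at he
      have := concat_eq_concat he; omega
  -- peel off the three fixed points
  have hW1 : (W ++ [a + 1]).Perm (List.range' 1 (a + 1)) := by
    rw [range'_concat_one]; exact hWperm.append (List.Perm.refl _)
  have hW2 : ((W ++ [a + 1]) ++ [a + 2]).Perm (List.range' 1 (a + 2)) := by
    rw [show a + 2 = (a + 1) + 1 by omega, range'_concat_one]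
    exact hW1.append (List.Perm.refl _)
  have hπ' : (A ++ [a + 3] ++ B ++ [a + 2] ++ C ++ [a + 1] ++ D).Perm
      (List.range' 1 ((a + 2) + 1)) := by
    rw [show (a + 2) + 1 = a + 3 by omega]; exact hπ
  have hπne' : A ++ [a + 3] ++ B ++ [a + 2] ++ C ++ [a + 1] ++ D
      ≠ List.range' 1 ((a + 2) + 1) := by
    rw [show (a + 2) + 1 = a + 3 by omega]; exact hπne
  have hSπ' : stackSort (A ++ [a + 3] ++ B ++ [a + 2] ++ C ++ [a + 1] ++ D)
      = ((W ++ [a + 1]) ++ [a + 2]) ++ [(a + 2) + 1] := by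
    rw [show (a + 2) + 1 = a + 3 by omega]; exact hSπ
  have hstep := ssc_step hπ' hπne' hSπ' hW2
  have hfix2 : ssc ((W ++ [a + 1]) ++ [(a + 1) + 1]) = ssc (W ++ [a + 1]) :=
    ssc_append_fix hW1
  rw [show (a + 1) + 1 = a + 2 by omega] at hfix2
  have hfix1 : ssc (W ++ [a + 1]) = ssc W := ssc_append_fix hWperm
  have hssc : ssc (A ++ [a + 3] ++ B ++ [a + 2] ++ C ++ [a + 1] ++ D) = 1 + ssc W := by
    rw [hstep, hfix2, hfix1]
  rw [hssc]
  have hchar := ssc_char a (by omega) W hWperm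
  constructor
  · intro hh; exact hchar.mp (by omega)
  · intro hh; have := hchar.mpr hh; omega
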